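/- In a finite projective rectangle of order (m,n), each ordinary point is incident with exactly n ordinary lines. -/

import Mathlib

open scoped Classical

/-- A projective rectangle: an incidence structure satisfying axioms (A1)–(A6). -/
structure ProjRect (P L : Type*) where
  incid : P → L → Prop
  /-- (A4) the special point -/
  D : P
  /-- (A1) every two distinct points are incident with exactly one line -/
  A1 : ∀ p q : P, p ≠ q → ∃! l : L, incid p l ∧ incid q l
  /-- (A2) there exist four points with no three collinear -/
  A2 : ∃ p1 p2 p3 p4 : P, p1 ≠ p2 ∧ p1 ≠ p3 ∧ p1 ≠ p4 ∧ p2 ≠ p3 ∧ p2 ≠ p4 ∧ p3 ≠ p4 ∧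
    ∀ l : L, ¬(incid p1 l ∧ incid p2 l ∧ incid p3 l) ∧ ¬(incid p1 l ∧ incid p2 l ∧ incid p4 l) ∧
      ¬(incid p1 l ∧ incid p3 l ∧ incid p4 l) ∧ ¬(incid p2 l ∧ incid p3 l ∧ incid p4 l)
  /-- (A3) every line has at least three points -/
  A3 : ∀ l : L, ∃ p1 p2 p3 : P, p1 ≠ p2 ∧ p1 ≠ p3 ∧ p2 ≠ p3 ∧
    incid p1 l ∧ incid p2 l ∧ incid p3 l
  /-- (A5) each special line intersects every other line in exactly one point -/
  A5 : ∀ s l : L, incid D s → l ≠ s → ∃! p : P, incid p s ∧ incid p l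
  /-- (A6) Pasch-type axiom -/
  A6 : ∀ l1 l2 g h : L, ¬incid D l1 → ¬incid D l2 → (∃ p : P, incid p l1 ∧ incid p l2) →
    (∃ p1 p2 p3 p4 : P, p1 ≠ p2 ∧ p1 ≠ p3 ∧ p1 ≠ p4 ∧ p2 ≠ p3 ∧ p2 ≠ p4 ∧ p3 ≠ p4 ∧
      incid p1 g ∧ incid p1 l1 ∧ incid p2 g ∧ incid p2 l2 ∧
      incid p3 h ∧ incid p3 l1 ∧ incid p4 h ∧ incid p4 l2) →
    ∃ p : P, incid p g ∧ incid p h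

namespace ProjRect

variable {P L : Type*} (R : ProjRect P L)

/-- A line is special if it is incident with the special point `D`. -/
def SpecialLine (l : L) : Prop := R.incid R.D l

/-- A line is ordinary if it is not incident with `D`. -/
def OrdinaryLine (l : L) : Prop := ¬ R.incid R.D l

/-- A point is ordinary if it is not `D`. -/
def OrdinaryPoint (p : P) : Prop := p ≠ R.D

/-- The set of points of a line. -/
def points (l : L) : Set P := {p | R.incid p l}

/-- `R` has order `(m, n)`: there are `m+1` special lines, each with `n+1` points. -/
def HasOrder (m n : ℕ) : Prop :=
  {l : L | R.SpecialLine l}.ncard = m + 1 ∧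
  ∀ l : L, R.SpecialLine l → (R.points l).ncard = n + 1

/-- Nontrivial: there exist two disjoint ordinary lines (i.e. `R` is not a projective plane). -/
def Nontrivial : Prop :=
  ∃ l1 l2 : L, R.OrdinaryLine l1 ∧ R.OrdinaryLine l2 ∧ ∀ p : P, ¬(R.incid p l1 ∧ R.incid p l2)

/-- An incidence substructure `(Ps, Ls)` that is a projective plane. -/
def IsSubplane (Ps : Set P) (Ls : Set L) : Prop :=
  (∀ p ∈ Ps, ∀ q ∈ Ps, p ≠ q → ∃! l : L, l ∈ Ls ∧ R.incid p l ∧ R.incid q l) ∧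
  (∀ l ∈ Ls, ∀ l' ∈ Ls, l ≠ l' → ∃! p : P, p ∈ Ps ∧ R.incid p l ∧ R.incid p l') ∧
  (∀ l ∈ Ls, ∀ p : P, R.incid p l → p ∈ Ps) ∧
  (∃ p1 ∈ Ps, ∃ p2 ∈ Ps, ∃ p3 ∈ Ps, ∃ p4 ∈ Ps,
    p1 ≠ p2 ∧ p1 ≠ p3 ∧ p1 ≠ p4 ∧ p2 ≠ p3 ∧ p2 ≠ p4 ∧ p3 ≠ p4 ∧
    ∀ l ∈ Ls, ¬(R.incid p1 l ∧ R.incid p2 l ∧ R.incid p3 l) ∧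
      ¬(R.incid p1 l ∧ R.incid p2 l ∧ R.incid p4 l) ∧
      ¬(R.incid p1 l ∧ R.incid p3 l ∧ R.incid p4 l) ∧
      ¬(R.incid p2 l ∧ R.incid p3 l ∧ R.incid p4 l))

/-- A plane: a maximal subplane. -/
def IsPlane (Ps : Set P) (Ls : Set L) : Prop :=
  R.IsSubplane Ps Ls ∧
  ∀ Ps' Ls', R.IsSubplane Ps' Ls' → Ps ⊆ Ps' → Ls ⊆ Ls' → Ps = Ps' ∧ Ls = Ls'

/-- The graph of lines: vertices are the ordinary lines, adjacent iff they intersect. -/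
def lineGraph : SimpleGraph {l : L // R.OrdinaryLine l} where
  Adj l1 l2 := l1 ≠ l2 ∧ ∃ p : P, R.incid p l1.1 ∧ R.incid p l2.1
  symm := by
    constructor
    rintro a b ⟨hne, p, h1, h2⟩
    exact ⟨hne.symm, p, h2, h1⟩
  loopless := by
    constructor
    rintro a ⟨hne, -⟩
    exact hne rfl

end ProjRect

/-- In a finite projective rectangle of order (m,n), each ordinary point
is incident with exactly n ordinary lines. -/
theorem stmt2 {P L : Type*} [Fintype P] [Fintype L] (R : ProjRect P L) (m n : ℕ)
    (h : R.HasOrder m n) :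
    ∀ p : P, R.OrdinaryPoint p → {l : L | R.OrdinaryLine l ∧ R.incid p l}.ncard = n := by
  classical
  obtain ⟨hcard, hpts⟩ := h
  intro p hp
  have hp' : p ≠ R.D := hp
  -- three points distinct from D, no line through all three
  obtain ⟨a, b, c, hab, hac, hbc, haD, hbD, hcD, htri⟩ :
      ∃ a b c : P, a ≠ b ∧ a ≠ c ∧ b ≠ c ∧ a ≠ R.D ∧ b ≠ R.D ∧ c ≠ R.D ∧
        ∀ l : L, ¬(R.incid a l ∧ R.incid b l ∧ R.incid c l) := by
    obtain ⟨p1, p2, p3, p4, h12, h13, h14, h23, h24, h34, hq⟩ := R.A2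
    by_cases e1 : p1 = R.D
    · exact ⟨p2, p3, p4, h23, h24, h34, fun e => h12 (e1.trans e.symm),
        fun e => h13 (e1.trans e.symm), fun e => h14 (e1.trans e.symm),
        fun l => (hq l).2.2.2⟩
    · by_cases e2 : p2 = R.D
      · exact ⟨p1, p3, p4, h13, h14, h34, e1, fun e => h23 (e2.trans e.symm),
          fun e => h24 (e2.trans e.symm), fun l => (hq l).2.2.1⟩
      · by_cases e3 : p3 = R.D
        · exact ⟨p1, p2, p4, h12, h14, h24, e1, e2,
            fun e => h34 (e3.trans e.symm), fun l => (hq l).2.1⟩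
        · exact ⟨p1, p2, p3, h12, h13, h23, e1, e2, e3, fun l => (hq l).1⟩
  obtain ⟨la, ⟨hDla, hala⟩, hula⟩ := R.A1 R.D a (Ne.symm haD)
  obtain ⟨lb, ⟨hDlb, hblb⟩, hulb⟩ := R.A1 R.D b (Ne.symm hbD)
  obtain ⟨lc, ⟨hDlc, hclc⟩, hulc⟩ := R.A1 R.D c (Ne.symm hcD)
  -- a special line missing p
  have hex : ∃ s : L, R.incid R.D s ∧ ¬ R.incid p s := by
    have hne : la ≠ lb ∨ la ≠ lc := by
      by_contra hcon
      push_neg at hcon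
      obtain ⟨e1, e2⟩ := hcon
      exact htri la ⟨hala, e1.symm ▸ hblb, e2.symm ▸ hclc⟩
    have key : ∀ l1 l2 : L, l1 ≠ l2 → R.incid R.D l1 → R.incid R.D l2 →
        R.incid p l1 → R.incid p l2 → False := by
      intro l1 l2 hnel h1 h2 hp1 hp2
      obtain ⟨l, -, hu⟩ := R.A1 p R.D hp'
      exact hnel ((hu l1 ⟨hp1, h1⟩).trans (hu l2 ⟨hp2, h2⟩).symm)
    rcases hne with hne | hne
    · by_cases hpa : R.incid p la
      · exact ⟨lb, hDlb, fun hpb => key la lb hne hDla hDlb hpa hpb⟩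
      · exact ⟨la, hDla, hpa⟩
    · by_cases hpa : R.incid p la
      · exact ⟨lc, hDlc, fun hpc => key la lc hne hDla hDlc hpa hpc⟩
      · exact ⟨la, hDla, hpa⟩
  obtain ⟨s, hsD, hps⟩ := hex
  have hDs : R.D ∈ R.points s := hsD
  have hne_s : ∀ l : L, R.incid p l → l ≠ s := fun l hl he => hps (he ▸ hl)
  have hcongr : {l : L | R.OrdinaryLine l ∧ R.incid p l}.ncard
      = (R.points s \ {R.D}).ncard := by
    apply Set.ncard_congr (fun l (hl : l ∈ {l : L | R.OrdinaryLine l ∧ R.incid p l}) =>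
      (R.A5 s l hsD (hne_s l hl.2)).choose)
    · intro l hl
      have hspec := (R.A5 s l hsD (hne_s l hl.2)).choose_spec.1
      refine ⟨hspec.1, ?_⟩
      intro he
      rw [Set.mem_singleton_iff] at he
      exact hl.1 (he ▸ hspec.2)
    · intro l1 l2 hl1 hl2 heq
      have s1 := (R.A5 s l1 hsD (hne_s l1 hl1.2)).choose_spec.1
      have s2 := (R.A5 s l2 hsD (hne_s l2 hl2.2)).choose_spec.1
      set q1 := (R.A5 s l1 hsD (hne_s l1 hl1.2)).choose with hq1
      set q2 := (R.A5 s l2 hsD (hne_s l2 hl2.2)).choose with hq2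
      have hq1p : p ≠ q1 := fun e => hps (e ▸ s1.1)
      obtain ⟨l, -, hu⟩ := R.A1 p q1 hq1p
      have e1 : l1 = l := hu l1 ⟨hl1.2, s1.2⟩
      have e2 : l2 = l := hu l2 ⟨hl2.2, heq ▸ s2.2⟩
      exact e1.trans e2.symm
    · intro q hq
      obtain ⟨hqs, hqD⟩ := hq
      rw [Set.mem_singleton_iff] at hqD
      have hqp : q ≠ p := fun e => hps (e ▸ hqs)
      obtain ⟨l, ⟨hpl, hql⟩, hu⟩ := R.A1 p q hqp.symm
      have hlo : R.OrdinaryLine l := by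
        intro hDl
        obtain ⟨l', -, hu'⟩ := R.A1 R.D q (Ne.symm hqD)
        have hls : l = s := (hu' l ⟨hDl, hql⟩).trans (hu' s ⟨hsD, hqs⟩).symm
        exact hps (hls ▸ hpl)
      refine ⟨l, ⟨hlo, hpl⟩, ?_⟩
      exact ((R.A5 s l hsD (hne_s l hpl)).choose_spec.2 q ⟨hqs, hql⟩).symm
  rw [hcongr, Set.ncard_diff_singleton_of_mem hDs,
    hpts s hsD]
  simp
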